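/- Let $r \geq 3$ be odd, $q = e^{2\pi i/r}$, and let $n_r = (r-1)/2$ if $r \equiv 1 \pmod 4$ and $n_r = (r-3)/2$ if $r \equiv 3 \pmod 4$. Suppose $m_1, m_2, m_3, m_4 \in I_r$ are such that the 6-tuple $(n_r, m_1, m_2, n_r, m_3, m_4)$ is $r$-admissible. Then $m_1 + m_2 + m_3 + m_4$ is even and the square of the quantum 6j-symbol satisfies $\left|\begin{smallmatrix} n_r & m_1 & m_2 \\ n_r & m_3 & m_4 \end{smallmatrix}\right|^2 \geq 0$ as a real number. -/
import Mathlib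


open scoped Real
open Complex Finset

noncomputable section

/-- The quantum integer `[n]` at `q = exp(2πi/r)`. -/
def qint (r : ℕ) (n : ℤ) : ℂ :=
  (Complex.exp (2 * Real.pi * Complex.I / r) ^ n -
    Complex.exp (2 * Real.pi * Complex.I / r) ^ (-n)) /
  (Complex.exp (2 * Real.pi * Complex.I / r) -
    (Complex.exp (2 * Real.pi * Complex.I / r))⁻¹)

/-- The quantum factorial `[N]! = ∏_{k=1}^N [k]`, with `[0]! = 1`. -/
def qfact (r N : ℕ) : ℂ := ∏ k ∈ Finset.Icc 1 N, qint r (k : ℤ)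

/-- A triple `(a₁,a₂,a₃)` of elements of `I_r = {0,…,r-2}` is `r`-admissible. -/
def AdmissibleTriple (r a₁ a₂ a₃ : ℕ) : Prop :=
  a₁ ≤ r - 2 ∧ a₂ ≤ r - 2 ∧ a₃ ≤ r - 2 ∧
  Even (a₁ + a₂ + a₃) ∧
  a₁ + a₂ + a₃ ≤ 2 * (r - 2) ∧
  a₃ ≤ a₁ + a₂ ∧ a₂ ≤ a₁ + a₃ ∧ a₁ ≤ a₂ + a₃

/-- A 6-tuple `(a₁,…,a₆)` is `r`-admissible. -/
def Admissible6 (r a₁ a₂ a₃ a₄ a₅ a₆ : ℕ) : Prop :=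
  AdmissibleTriple r a₁ a₂ a₃ ∧ AdmissibleTriple r a₁ a₅ a₆ ∧
  AdmissibleTriple r a₂ a₄ a₆ ∧ AdmissibleTriple r a₃ a₄ a₅

/-- `Δ(a₁,a₂,a₃)`, using the principal complex square root, which realizes the
convention `√y = i√|y|` for negative real `y`. -/
def qdelta (r a₁ a₂ a₃ : ℕ) : ℂ :=
  (qfact r ((a₁ + a₂ - a₃) / 2) * qfact r ((a₁ + a₃ - a₂) / 2) *
      qfact r ((a₂ + a₃ - a₁) / 2) / qfact r ((a₁ + a₂ + a₃) / 2 + 1)) ^ (1 / 2 : ℂ)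

/-- The quantum 6j-symbol `|a₁ a₂ a₃; a₄ a₅ a₆|` at `q = exp(2πi/r)`. -/
def sixj (r a₁ a₂ a₃ a₄ a₅ a₆ : ℕ) : ℂ :=
  Complex.I ^ (-(a₁ + a₂ + a₃ + a₄ + a₅ + a₆ : ℤ)) *
    qdelta r a₁ a₂ a₃ * qdelta r a₁ a₅ a₆ * qdelta r a₂ a₄ a₆ * qdelta r a₃ a₄ a₅ *
    ∑ k ∈ Finset.Icc
        (max (max ((a₁ + a₂ + a₃) / 2) ((a₁ + a₅ + a₆) / 2))
             (max ((a₂ + a₄ + a₆) / 2) ((a₃ + a₄ + a₅) / 2)))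
        (min ((a₁ + a₂ + a₄ + a₅) / 2)
             (min ((a₁ + a₃ + a₄ + a₆) / 2) ((a₂ + a₃ + a₅ + a₆) / 2))),
      ((-1 : ℂ) ^ k * qfact r (k + 1)) /
        (qfact r (k - (a₁ + a₂ + a₃) / 2) * qfact r (k - (a₁ + a₅ + a₆) / 2) *
         qfact r (k - (a₂ + a₄ + a₆) / 2) * qfact r (k - (a₃ + a₄ + a₅) / 2) *
         qfact r ((a₁ + a₂ + a₄ + a₅) / 2 - k) * qfact r ((a₁ + a₃ + a₄ + a₆) / 2 - k) *
         qfact r ((a₂ + a₃ + a₅ + a₆) / 2 - k))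

/-- `n_r = (r-1)/2` if `r ≡ 1 mod 4`, and `n_r = (r-3)/2` if `r ≡ 3 mod 4`. -/
def nr (r : ℕ) : ℕ := if r % 4 = 1 then (r - 1) / 2 else (r - 3) / 2


/-! ### Auxiliary real-valued versions and lemmas -/

/-- Real form of the quantum integer. -/
def rint (r : ℕ) (k : ℤ) : ℝ :=
  Real.sin (2 * Real.pi * k / r) / Real.sin (2 * Real.pi / r)

/-- Real form of the quantum factorial. -/
def rfact (r N : ℕ) : ℝ := ∏ k ∈ Finset.Icc 1 N, rint r (k : ℤ)

/-- Real form of `Δ²`. -/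
def rdelta2 (r a b c : ℕ) : ℝ :=
  rfact r ((a + b - c) / 2) * rfact r ((a + c - b) / 2) * rfact r ((b + c - a) / 2) /
    rfact r ((a + b + c) / 2 + 1)

/-- Real form of the 6j sum. -/
def rsum (r a₁ a₂ a₃ a₄ a₅ a₆ : ℕ) : ℝ :=
  ∑ k ∈ Finset.Icc
      (max (max ((a₁ + a₂ + a₃) / 2) ((a₁ + a₅ + a₆) / 2))
           (max ((a₂ + a₄ + a₆) / 2) ((a₃ + a₄ + a₅) / 2)))
      (min ((a₁ + a₂ + a₄ + a₅) / 2)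
           (min ((a₁ + a₃ + a₄ + a₆) / 2) ((a₂ + a₃ + a₅ + a₆) / 2))),
    ((-1 : ℝ) ^ k * rfact r (k + 1)) /
      (rfact r (k - (a₁ + a₂ + a₃) / 2) * rfact r (k - (a₁ + a₅ + a₆) / 2) *
       rfact r (k - (a₂ + a₄ + a₆) / 2) * rfact r (k - (a₃ + a₄ + a₅) / 2) *
       rfact r ((a₁ + a₂ + a₄ + a₅) / 2 - k) * rfact r ((a₁ + a₃ + a₄ + a₆) / 2 - k) *
       rfact r ((a₂ + a₃ + a₅ + a₆) / 2 - k))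

lemma exp_mul_I_sub (x : ℝ) :
    Complex.exp ((x : ℂ) * Complex.I) - Complex.exp (((-x : ℝ) : ℂ) * Complex.I)
      = 2 * Complex.I * Complex.sin (x : ℂ) := by
  rw [Complex.sin]
  push_cast
  linear_combination (Complex.exp ((x : ℂ) * Complex.I) -
    Complex.exp (-(x : ℂ) * Complex.I)) * Complex.I_sq

lemma qint_eq (r : ℕ) (hr : r ≠ 0) (k : ℤ) : qint r k = ((rint r k : ℝ) : ℂ) := by
  have h2I : (2 : ℂ) * Complex.I ≠ 0 := by simp [Complex.I_ne_zero]
  unfold qint rint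
  rw [show (2 * (Real.pi : ℂ) * Complex.I / (r : ℂ))
      = ((2 * Real.pi / (r : ℝ) : ℝ) : ℂ) * Complex.I by push_cast; ring]
  rw [← Complex.exp_int_mul _ k, ← Complex.exp_int_mul _ (-k), ← Complex.exp_neg]
  rw [show ((k : ℂ)) * (((2 * Real.pi / (r : ℝ) : ℝ) : ℂ) * Complex.I)
      = ((2 * Real.pi * (k : ℝ) / (r : ℝ) : ℝ) : ℂ) * Complex.I by push_cast; ring]
  rw [show ((-k : ℤ) : ℂ) * (((2 * Real.pi / (r : ℝ) : ℝ) : ℂ) * Complex.I)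
      = ((-(2 * Real.pi * (k : ℝ) / (r : ℝ)) : ℝ) : ℂ) * Complex.I by push_cast; ring]
  rw [show -(((2 * Real.pi / (r : ℝ) : ℝ) : ℂ) * Complex.I)
      = ((-(2 * Real.pi / (r : ℝ)) : ℝ) : ℂ) * Complex.I by push_cast; ring]
  rw [exp_mul_I_sub, exp_mul_I_sub, mul_div_mul_left _ _ h2I]
  rw [← Complex.ofReal_sin, ← Complex.ofReal_sin, ← Complex.ofReal_div]

lemma qfact_real (r : ℕ) (hr : r ≠ 0) (N : ℕ) : qfact r N = ((rfact r N : ℝ) : ℂ) := by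
  unfold qfact rfact
  rw [Complex.ofReal_prod]
  exact Finset.prod_congr rfl fun k _ => qint_eq r hr _

lemma sin_den_pos {r : ℕ} (hr : 3 ≤ r) : 0 < Real.sin (2 * Real.pi / r) := by
  have hrpos : (0 : ℝ) < r := by
    have : (3 : ℝ) ≤ r := by exact_mod_cast hr
    linarith
  have hr3 : (3 : ℝ) ≤ r := by exact_mod_cast hr
  apply Real.sin_pos_of_pos_of_lt_pi
  · positivity
  · rw [div_lt_iff₀ hrpos]
    nlinarith [Real.pi_pos]

lemma rint_pos {r k : ℕ} (hr : 3 ≤ r) (h1 : 1 ≤ k) (h2 : k ≤ (r - 1) / 2) :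
    0 < rint r (k : ℤ) := by
  have hrpos : (0 : ℝ) < r := by
    have : (3 : ℝ) ≤ r := by exact_mod_cast hr
    linarith
  have hk1 : (1 : ℝ) ≤ k := by exact_mod_cast h1
  have hk2 : 2 * (k : ℝ) < r := by
    have : 2 * k < r := by omega
    exact_mod_cast this
  unfold rint
  apply div_pos _ (sin_den_pos hr)
  push_cast
  apply Real.sin_pos_of_pos_of_lt_pi
  · positivity
  · rw [div_lt_iff₀ hrpos]
    nlinarith [Real.pi_pos]

lemma rint_neg {r k : ℕ} (hr : 3 ≤ r) (hodd : r % 2 = 1) (h1 : (r - 1) / 2 < k)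
    (h2 : k ≤ r - 1) : rint r (k : ℤ) < 0 := by
  have hrpos : (0 : ℝ) < r := by
    have : (3 : ℝ) ≤ r := by exact_mod_cast hr
    linarith
  have hk1 : (r : ℝ) < 2 * k := by
    have : r < 2 * k := by omega
    exact_mod_cast this
  have hk2 : (k : ℝ) < r := by
    have : k < r := by omega
    exact_mod_cast this
  unfold rint
  apply div_neg_of_neg_of_pos _ (sin_den_pos hr)
  push_cast
  have hx : 2 * Real.pi * (k : ℝ) / r = (2 * Real.pi * (k : ℝ) / r - Real.pi) + Real.pi := by
    ring
  rw [hx, Real.sin_add_pi, neg_lt_zero]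
  apply Real.sin_pos_of_pos_of_lt_pi
  · rw [sub_pos, lt_div_iff₀ hrpos]
    nlinarith [Real.pi_pos]
  · rw [sub_lt_iff_lt_add, div_lt_iff₀ hrpos]
    nlinarith [Real.pi_pos]

lemma rfact_pos {r : ℕ} (hr : 3 ≤ r) : ∀ {N : ℕ}, N ≤ (r - 1) / 2 → 0 < rfact r N := by
  intro N
  induction N with
  | zero => intro _; simp [rfact]
  | succ M ih =>
    intro hN
    have hstep : rfact r (M + 1) = rfact r M * rint r ((M + 1 : ℕ) : ℤ) :=
      Finset.prod_Icc_succ_top (by omega) _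
    rw [hstep]
    exact mul_pos (ih (by omega)) (rint_pos hr (by omega) hN)

lemma rfact_sign {r : ℕ} (hr : 3 ≤ r) (hodd : r % 2 = 1) :
    ∀ {N : ℕ}, N ≤ r - 1 → 0 < (-1 : ℝ) ^ (N - (r - 1) / 2) * rfact r N := by
  intro N
  induction N with
  | zero => intro _; simp [rfact]
  | succ M ih =>
    intro hN
    have hstep : rfact r (M + 1) = rfact r M * rint r ((M + 1 : ℕ) : ℤ) :=
      Finset.prod_Icc_succ_top (by omega) _
    by_cases hM : M + 1 ≤ (r - 1) / 2
    · have hz : M + 1 - (r - 1) / 2 = 0 := by omega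
      rw [hz, pow_zero, one_mul]
      exact rfact_pos hr hM
    · have hneg : rint r ((M + 1 : ℕ) : ℤ) < 0 := rint_neg hr hodd (by omega) hN
      have hexp : M + 1 - (r - 1) / 2 = (M - (r - 1) / 2) + 1 := by omega
      have hM' := ih (by omega)
      have h2 : 0 < ((-1 : ℝ) ^ (M - (r - 1) / 2) * rfact r M) * (-(rint r ((M + 1 : ℕ) : ℤ))) :=
        mul_pos hM' (neg_pos.2 hneg)
      rw [hexp, pow_succ, hstep]
      exact lt_of_lt_of_eq h2 (by ring)

lemma cpow_half_sq (w : ℂ) : (w ^ (1 / 2 : ℂ)) ^ 2 = w := by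
  rcases eq_or_ne w 0 with h | h
  · subst h
    rw [Complex.zero_cpow (by norm_num)]
    norm_num
  · rw [sq, ← Complex.cpow_add _ _ h]
    norm_num

lemma qdelta_sq (r : ℕ) (hr : r ≠ 0) (a b c : ℕ) :
    qdelta r a b c ^ 2 = ((rdelta2 r a b c : ℝ) : ℂ) := by
  rw [qdelta, cpow_half_sq, rdelta2]
  simp only [qfact_real r hr]
  push_cast
  ring

lemma I_zpow_neg_sq {e : ℤ} (he : Even e) : (Complex.I ^ (-e)) ^ (2 : ℕ) = 1 := by
  rw [← zpow_natCast (Complex.I ^ (-e)), ← zpow_mul]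
  have h1 : (-e) * ((2 : ℕ) : ℤ) = 4 * (-(e / 2)) := by
    obtain ⟨t, ht⟩ := he
    omega
  have h4 : Complex.I ^ (4 : ℤ) = 1 := by
    rw [show (4 : ℤ) = ((4 : ℕ) : ℤ) from rfl, zpow_natCast]
    norm_num [pow_succ, Complex.I_mul_I]
  rw [h1, zpow_mul, h4, one_zpow]

lemma rsum_eq (r : ℕ) (hr : r ≠ 0) (a₁ a₂ a₃ a₄ a₅ a₆ : ℕ) :
    (∑ k ∈ Finset.Icc
        (max (max ((a₁ + a₂ + a₃) / 2) ((a₁ + a₅ + a₆) / 2))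
             (max ((a₂ + a₄ + a₆) / 2) ((a₃ + a₄ + a₅) / 2)))
        (min ((a₁ + a₂ + a₄ + a₅) / 2)
             (min ((a₁ + a₃ + a₄ + a₆) / 2) ((a₂ + a₃ + a₅ + a₆) / 2))),
      ((-1 : ℂ) ^ k * qfact r (k + 1)) /
        (qfact r (k - (a₁ + a₂ + a₃) / 2) * qfact r (k - (a₁ + a₅ + a₆) / 2) *
         qfact r (k - (a₂ + a₄ + a₆) / 2) * qfact r (k - (a₃ + a₄ + a₅) / 2) *
         qfact r ((a₁ + a₂ + a₄ + a₅) / 2 - k) * qfact r ((a₁ + a₃ + a₄ + a₆) / 2 - k) *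
         qfact r ((a₂ + a₃ + a₅ + a₆) / 2 - k)))
      = ((rsum r a₁ a₂ a₃ a₄ a₅ a₆ : ℝ) : ℂ) := by
  rw [rsum, Complex.ofReal_sum]
  refine Finset.sum_congr rfl fun k _ => ?_
  simp only [qfact_real r hr]
  push_cast
  ring

lemma sixj_sq_eq (r : ℕ) (hr : r ≠ 0) (a₁ a₂ a₃ a₄ a₅ a₆ : ℕ)
    (he : Even ((a₁ : ℤ) + a₂ + a₃ + a₄ + a₅ + a₆)) :
    sixj r a₁ a₂ a₃ a₄ a₅ a₆ ^ 2 =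
      ((rdelta2 r a₁ a₂ a₃ * rdelta2 r a₁ a₅ a₆ * rdelta2 r a₂ a₄ a₆ * rdelta2 r a₃ a₄ a₅ *
        rsum r a₁ a₂ a₃ a₄ a₅ a₆ ^ 2 : ℝ) : ℂ) := by
  rw [sixj]
  rw [rsum_eq r hr]
  simp only [mul_pow]
  rw [I_zpow_neg_sq he, qdelta_sq r hr, qdelta_sq r hr, qdelta_sq r hr, qdelta_sq r hr]
  push_cast
  ring

lemma neg_one_pow_mul_div_pos {P D : ℝ} (s : ℕ) (hP : 0 < P)
    (hD : 0 < (-1 : ℝ) ^ s * D) : 0 < (-1 : ℝ) ^ s * (P / D) := by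
  rcases Nat.even_or_odd s with hs | hs
  · rw [hs.neg_one_pow, one_mul] at hD ⊢
    exact div_pos hP hD
  · rw [hs.neg_one_pow] at hD ⊢
    have hDneg : D < 0 := by linarith
    have := div_neg_of_pos_of_neg hP hDneg
    nlinarith

lemma rdelta2_sign {r : ℕ} (hr : 3 ≤ r) (hodd : r % 2 = 1) (a b c : ℕ)
    (h1 : (a + b - c) / 2 ≤ (r - 1) / 2) (h2 : (a + c - b) / 2 ≤ (r - 1) / 2)
    (h3 : (b + c - a) / 2 ≤ (r - 1) / 2) (h4 : (a + b + c) / 2 + 1 ≤ r - 1) :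
    0 < (-1 : ℝ) ^ ((a + b + c) / 2 + 1 - (r - 1) / 2) * rdelta2 r a b c := by
  have hP : 0 < rfact r ((a + b - c) / 2) * rfact r ((a + c - b) / 2) * rfact r ((b + c - a) / 2) :=
    mul_pos (mul_pos (rfact_pos hr h1) (rfact_pos hr h2)) (rfact_pos hr h3)
  have hD := rfact_sign hr hodd h4
  rw [rdelta2]
  exact neg_one_pow_mul_div_pos _ hP hD

theorem sixj_sq_nonneg (r : ℕ) (hr : 3 ≤ r) (hodd : Odd r) (m₁ m₂ m₃ m₄ : ℕ)
    (hadm : Admissible6 r (nr r) m₁ m₂ (nr r) m₃ m₄) :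
    Even (m₁ + m₂ + m₃ + m₄) ∧
    (sixj r (nr r) m₁ m₂ (nr r) m₃ m₄ ^ 2).im = 0 ∧
    0 ≤ (sixj r (nr r) m₁ m₂ (nr r) m₃ m₄ ^ 2).re := by
  obtain ⟨⟨hb11, hb12, hb13, hp1, hs1, ht11, ht12, ht13⟩,
          ⟨hb21, hb22, hb23, hp2, hs2, ht21, ht22, ht23⟩,
          ⟨hb31, hb32, hb33, hp3, hs3, ht31, ht32, ht33⟩,
          ⟨hb41, hb42, hb43, hp4, hs4, ht41, ht42, ht43⟩⟩ := hadm
  rw [Nat.even_iff] at hp1 hp2 hp3 hp4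
  have hr2 : r % 2 = 1 := Nat.odd_iff.mp hodd
  have hnn : (r % 4 = 1 ∧ nr r = (r - 1) / 2) ∨ (r % 4 = 3 ∧ nr r = (r - 3) / 2) := by
    unfold nr
    split_ifs with h
    · exact Or.inl ⟨h, rfl⟩
    · exact Or.inr ⟨by omega, rfl⟩
  have hne : r ≠ 0 := by omega
  have hEsum : Even ((nr r : ℤ) + m₁ + m₂ + nr r + m₃ + m₄) := by
    rw [Int.even_iff]
    omega
  refine ⟨?_, ?_, ?_⟩
  · rw [Nat.even_iff]; omega
  · rw [sixj_sq_eq r hne _ _ _ _ _ _ hEsum, Complex.ofReal_im]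
  · rw [sixj_sq_eq r hne _ _ _ _ _ _ hEsum, Complex.ofReal_re]
    have hd1 : 0 < (-1 : ℝ) ^ ((nr r + m₁ + m₂) / 2 + 1 - (r - 1) / 2) *
        rdelta2 r (nr r) m₁ m₂ :=
      rdelta2_sign hr hr2 _ _ _ (by omega) (by omega) (by omega) (by omega)
    have hd2 : 0 < (-1 : ℝ) ^ ((nr r + m₃ + m₄) / 2 + 1 - (r - 1) / 2) *
        rdelta2 r (nr r) m₃ m₄ :=
      rdelta2_sign hr hr2 _ _ _ (by omega) (by omega) (by omega) (by omega)
    have hd3 : 0 < (-1 : ℝ) ^ ((m₁ + nr r + m₄) / 2 + 1 - (r - 1) / 2) *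
        rdelta2 r m₁ (nr r) m₄ :=
      rdelta2_sign hr hr2 _ _ _ (by omega) (by omega) (by omega) (by omega)
    have hd4 : 0 < (-1 : ℝ) ^ ((m₂ + nr r + m₃) / 2 + 1 - (r - 1) / 2) *
        rdelta2 r m₂ (nr r) m₃ :=
      rdelta2_sign hr hr2 _ _ _ (by omega) (by omega) (by omega) (by omega)
    have hEv : Even (((nr r + m₁ + m₂) / 2 + 1 - (r - 1) / 2) +
        ((nr r + m₃ + m₄) / 2 + 1 - (r - 1) / 2) +
        ((m₁ + nr r + m₄) / 2 + 1 - (r - 1) / 2) +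
        ((m₂ + nr r + m₃) / 2 + 1 - (r - 1) / 2)) := by
      rw [Nat.even_iff]; omega
    have h' : 0 < (-1 : ℝ) ^ (((nr r + m₁ + m₂) / 2 + 1 - (r - 1) / 2) +
        ((nr r + m₃ + m₄) / 2 + 1 - (r - 1) / 2) +
        ((m₁ + nr r + m₄) / 2 + 1 - (r - 1) / 2) +
        ((m₂ + nr r + m₃) / 2 + 1 - (r - 1) / 2)) *
        (rdelta2 r (nr r) m₁ m₂ * rdelta2 r (nr r) m₃ m₄ * rdelta2 r m₁ (nr r) m₄ *
          rdelta2 r m₂ (nr r) m₃) :=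
      lt_of_lt_of_eq (mul_pos (mul_pos hd1 hd2) (mul_pos hd3 hd4)) (by ring)
    rw [hEv.neg_one_pow, one_mul] at h'
    exact mul_nonneg h'.le (sq_nonneg _)
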